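/- arXiv:quant-ph/0607061 — 3 statements merged into one kernel-verified Lean document; each statement's English description precedes it below -/
import Mathlib

section
/- Let ψ be a pure state in Schmidt form on ℂ^d ⊗ ℂ^d with Schmidt coefficients ordered decreasingly μ_1 ≥ μ_2 ≥ … ≥ μ_d ≥ 0, and let 1 ≤ k ≤ d. Then for every unit vector φ ∈ ℂ^d ⊗ ℂ^d whose matricization M_φ (defined by M_φ[i,j] = φ[(i,j)]) has rank at most k, one has |⟨ψ, φ⟩|² ≤ Σ_{i=1}^{k} μ_i²; moreover there exists such a unit vector φ of Schmidt rank at most k attaining equality. In other words, max over Schmidt-rank-≤k unit vectors φ of |⟨ψ, φ⟩|² equals Σ_{i=1}^{k} μ_i². -/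
open Matrix BigOperators

/-- A pure state in Schmidt form with Schmidt coefficients `μ`:
`ψ[(i,j)] = μ_i δ_{ij}`. -/
noncomputable def schmidtVec {d : ℕ} (μ : Fin d → ℝ) : Fin d × Fin d → ℂ :=
  fun p => if p.1 = p.2 then (μ p.1 : ℂ) else 0

/-- The matricization of a vector `φ ∈ ℂ^d ⊗ ℂ^d`: `M_φ[i,j] = φ[(i,j)]`. -/
def matricize {d : ℕ} (φ : Fin d × Fin d → ℂ) : Matrix (Fin d) (Fin d) ℂ :=
  Matrix.of fun i j => φ (i, j)

section Aux

open Submodule Module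
open scoped ComplexOrder

private lemma exists_factor' {d k : ℕ} (hkd : k ≤ d) (M : Matrix (Fin d) (Fin d) ℂ)
    (h : M.rank ≤ k) :
    ∃ (A : Matrix (Fin d) (Fin k) ℂ) (B : Matrix (Fin k) (Fin d) ℂ),
      M = A * B ∧ B * Bᴴ = 1 := by
  classical
  set E := EuclideanSpace ℂ (Fin d) with hE
  let L : (Fin d → ℂ) ≃ₗ[ℂ] E := (WithLp.linearEquiv 2 ℂ (Fin d → ℂ)).symm
  let W : Submodule ℂ E := (span ℂ (Set.range Mᴴᵀ)).map (L : (Fin d → ℂ) →ₗ[ℂ] E)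
  have hWrank : finrank ℂ W ≤ k := by
    have h1 : Mᴴ.rank ≤ k := by rwa [Matrix.rank_conjTranspose]
    have h2 := Matrix.rank_eq_finrank_span_cols Mᴴ
    have h3 : finrank ℂ W = finrank ℂ (span ℂ (Set.range Mᴴᵀ)) :=
      LinearEquiv.finrank_map_eq L _
    rw [show Mᴴ.col = Mᴴᵀ from rfl] at h2
    omega
  let w : Fin d → E := fun i => L (Mᴴᵀ i)
  have hwW : ∀ i, w i ∈ W := fun i =>
    Submodule.mem_map_of_mem (subset_span (Set.mem_range_self i))
  set r := finrank ℂ W with hr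
  let b₀ : OrthonormalBasis (Fin r) ℂ W := stdOrthonormalBasis ℂ W
  let v₀ : Fin d → E := fun i => if h : (i : ℕ) < r then (b₀ ⟨i, h⟩ : E) else 0
  have hv₀ : Orthonormal ℂ (Set.restrict {i : Fin d | (i : ℕ) < r} v₀) := by
    rw [orthonormal_iff_ite]
    rintro ⟨i, hi⟩ ⟨j, hj⟩
    have hi' : (i : ℕ) < r := hi
    have hj' : (j : ℕ) < r := hj
    have h0 := (orthonormal_iff_ite.mp b₀.orthonormal) ⟨i, hi'⟩ ⟨j, hj'⟩
    rw [Submodule.coe_inner] at h0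
    change inner ℂ (if h : (i : ℕ) < r then (b₀ ⟨i, h⟩ : E) else 0)
      (if h : (j : ℕ) < r then (b₀ ⟨j, h⟩ : E) else 0) = _
    rw [dif_pos hi', dif_pos hj']
    rw [h0]
    congr 1
    simp only [Fin.mk.injEq, Subtype.mk.injEq, eq_iff_iff]
    exact Fin.val_inj
  obtain ⟨b, hb⟩ := hv₀.exists_orthonormalBasis_extension_of_card_eq
    (by rw [Fintype.card_fin]; exact finrank_euclideanSpace_fin)
  let v : Fin k → E := fun j => b (Fin.castLE hkd j)
  have hv : Orthonormal ℂ v := b.orthonormal.comp _ (Fin.castLE_injective hkd)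
  have hmem : ∀ i : Fin d, w i ∈ span ℂ (Set.range v) := by
    intro i
    have hb₀mem : ∀ m : Fin r, ((b₀ m : E) ∈ span ℂ (Set.range v)) := by
      intro m
      have hmk : (m : ℕ) < k := lt_of_lt_of_le m.2 hWrank
      have : v ⟨m, hmk⟩ = (b₀ m : E) := by
        have h5 := hb ⟨(m : ℕ), lt_of_lt_of_le hmk hkd⟩ (by exact m.2)
        simp only [v]
        rw [show Fin.castLE hkd ⟨m, hmk⟩ = ⟨(m : ℕ), lt_of_lt_of_le hmk hkd⟩ from rfl, h5]
        simp only [v₀, dif_pos m.2]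
      rw [← this]
      exact subset_span (Set.mem_range_self _)
    obtain ⟨x, hx⟩ : ∃ x : W, (x : E) = w i := ⟨⟨w i, hwW i⟩, rfl⟩
    rw [← hx, ← b₀.sum_repr x]
    rw [Submodule.coe_sum]
    apply Submodule.sum_mem
    intro m _
    rw [Submodule.coe_smul]
    exact Submodule.smul_mem _ _ (hb₀mem m)
  choose c hc using fun i => (mem_span_range_iff_exists_fun ℂ).mp (hmem i)
  refine ⟨Matrix.of (fun i j => star (c i j)), Matrix.of (fun j t => star (v j t)), ?_, ?_⟩
  · ext i t
    have h1 : (∑ j, c i j • v j) = w i := hc i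
    have h2 : (∑ j, c i j • v j) t = w i t := by rw [h1]
    have h3 : w i t = star (M i t) := rfl
    have h4 : (∑ j, c i j • v j) t = ∑ j, c i j * v j t := by
      rw [WithLp.ofLp_sum, Finset.sum_apply]; rfl
    rw [h4, h3] at h2
    simp only [Matrix.mul_apply, Matrix.of_apply]
    calc M i t = star (star (M i t)) := by rw [star_star]
    _ = star (∑ j, c i j * v j t) := by rw [h2]
    _ = ∑ j, star (c i j) * star (v j t) := by
        rw [star_sum]; exact Finset.sum_congr rfl fun j _ => by rw [star_mul']
  · ext j l
    simp only [Matrix.mul_apply, Matrix.conjTranspose_apply, Matrix.of_apply, star_star]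
    have h0 := (orthonormal_iff_ite.mp hv) j l
    rw [PiLp.inner_apply] at h0
    simp only [RCLike.inner_apply] at h0
    simp only [RCLike.star_def]
    simp_rw [mul_comm ((starRingEnd ℂ) _) _]
    rw [h0]
    simp [Matrix.one_apply]

private lemma card_filter_lt' {d k : ℕ} (hkd : k ≤ d) :
    (Finset.univ.filter (fun i : Fin d => (i : ℕ) < k)).card = k := by
  have : (Finset.univ.filter (fun i : Fin d => (i : ℕ) < k)) =
      Finset.map ⟨Fin.castLE hkd, Fin.castLE_injective hkd⟩ Finset.univ := by
    ext i
    simp only [Finset.mem_filter, Finset.mem_univ, true_and, Finset.mem_map,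
      Function.Embedding.coeFn_mk]
    constructor
    · intro hi; exact ⟨⟨(i : ℕ), hi⟩, by ext; rfl⟩
    · rintro ⟨j, rfl⟩; exact j.2
  rw [this, Finset.card_map, Finset.card_univ, Fintype.card_fin]

private lemma sum_weighted_le' {d k : ℕ} (hk1 : 1 ≤ k) (hkd : k ≤ d) (m c : Fin d → ℝ)
    (hm : Antitone m) (hc0 : ∀ i, 0 ≤ c i) (hc1 : ∀ i, c i ≤ 1)
    (hsum : ∑ i, c i = k) :
    ∑ i, m i * c i ≤ ∑ i ∈ Finset.univ.filter (fun i : Fin d => (i : ℕ) < k), m i := by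
  have hkd1 : k - 1 < d := by omega
  set t := m ⟨k - 1, hkd1⟩ with ht
  have h1 : ∀ i : Fin d, (i : ℕ) < k → t ≤ m i := by
    intro i hi
    exact hm (by simp only [Fin.le_def]; omega)
  have h2 : ∀ i : Fin d, k ≤ (i : ℕ) → m i ≤ t := by
    intro i hi
    exact hm (by simp only [Fin.le_def]; omega)
  have step1 : ∑ i, m i * c i ≤
      ∑ i : Fin d, (if (i : ℕ) < k then m i + t * (c i - 1) else t * c i) := by
    apply Finset.sum_le_sum
    intro i _
    by_cases hik : (i : ℕ) < k
    · rw [if_pos hik]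
      nlinarith [h1 i hik, hc1 i]
    · rw [if_neg hik]
      nlinarith [h2 i (le_of_not_gt hik), hc0 i]
  refine step1.trans (le_of_eq ?_)
  rw [Finset.sum_ite]
  have hsplit : (∑ i ∈ Finset.univ.filter (fun i : Fin d => (i : ℕ) < k), c i)
      + (∑ i ∈ Finset.univ.filter (fun i : Fin d => ¬ (i : ℕ) < k), c i) = k := by
    rw [Finset.sum_filter_add_sum_filter_not]; exact hsum
  rw [Finset.sum_add_distrib, ← Finset.mul_sum, ← Finset.mul_sum,
    Finset.sum_sub_distrib, Finset.sum_const, card_filter_lt' hkd]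
  simp only [nsmul_eq_mul, mul_one]
  linear_combination t * hsplit

private lemma inner_schmidt' {d : ℕ} (μ : Fin d → ℝ) (φ : Fin d × Fin d → ℂ) :
    (∑ x : Fin d × Fin d, star (schmidtVec μ x) * φ x) = ∑ i, (μ i : ℂ) * φ (i, i) := by
  rw [Fintype.sum_prod_type]
  apply Finset.sum_congr rfl
  intro i _
  rw [Finset.sum_eq_single i]
  · simp [schmidtVec]
  · intro j _ hji
    simp [schmidtVec, Ne.symm hji]
  · intro hi; exact absurd (Finset.mem_univ i) hi

end Aux

theorem max_overlap_schmidt_rank_le {d k : ℕ} (hk1 : 1 ≤ k) (hkd : k ≤ d)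
    (μ : Fin d → ℝ) (hpos : ∀ i, 0 ≤ μ i) (hnorm : ∑ i, μ i ^ 2 = 1)
    (hmono : Antitone μ) :
    (∀ φ : Fin d × Fin d → ℂ, (∑ x, ‖φ x‖ ^ 2) = 1 → (matricize φ).rank ≤ k →
      ‖∑ x, star (schmidtVec μ x) * φ x‖ ^ 2 ≤
        ∑ i ∈ Finset.univ.filter (fun i : Fin d => (i : ℕ) < k), μ i ^ 2)
    ∧ (∃ φ : Fin d × Fin d → ℂ, (∑ x, ‖φ x‖ ^ 2) = 1 ∧ (matricize φ).rank ≤ k ∧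
      ‖∑ x, star (schmidtVec μ x) * φ x‖ ^ 2 =
        ∑ i ∈ Finset.univ.filter (fun i : Fin d => (i : ℕ) < k), μ i ^ 2) := by
  classical
  set S := ∑ i ∈ Finset.univ.filter (fun i : Fin d => (i : ℕ) < k), μ i ^ 2 with hSdef
  constructor
  · -- upper bound
    intro φ hφ hrank
    set M := matricize φ with hM
    obtain ⟨A, B, hMAB, hB1⟩ := exists_factor' hkd M hrank
    set P := Bᴴ * B with hP
    have hMP : M * P = M := by
      rw [hP, hMAB, Matrix.mul_assoc A B _, ← Matrix.mul_assoc B Bᴴ B, hB1, Matrix.one_mul]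
    set c : Fin d → ℝ := fun i => ∑ j, ‖B j i‖ ^ 2 with hc
    have hc0 : ∀ i, 0 ≤ c i := fun i => Finset.sum_nonneg fun j _ => sq_nonneg _
    have hPii : ∀ i, P i i = (c i : ℂ) := by
      intro i
      rw [hP, Matrix.mul_apply]
      push_cast [hc]
      exact Finset.sum_congr rfl fun j _ => by
        rw [Matrix.conjTranspose_apply, RCLike.star_def, RCLike.conj_mul]; norm_cast
    have hPH : Pᴴ = P := by
      rw [hP, Matrix.conjTranspose_mul, Matrix.conjTranspose_conjTranspose]
    have hP2 : P * P = P := by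
      rw [hP, Matrix.mul_assoc Bᴴ B _, ← Matrix.mul_assoc B Bᴴ B, hB1, Matrix.one_mul]
    have hcol : ∀ i, (∑ j, ‖P j i‖ ^ 2) = c i := by
      intro i
      have e1 : (P * P) i i = P i i := by rw [hP2]
      rw [Matrix.mul_apply, hPii i] at e1
      have e2 : ∀ j, P i j * P j i = ((‖P j i‖ ^ 2 : ℝ) : ℂ) := by
        intro j
        have : P i j = star (P j i) := by
          conv_lhs => rw [← hPH]
          rw [Matrix.conjTranspose_apply]
        rw [this, RCLike.star_def, RCLike.conj_mul]; norm_cast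
      rw [Finset.sum_congr rfl (fun j _ => e2 j)] at e1
      push_cast at e1
      exact_mod_cast e1
    have hc1 : ∀ i, c i ≤ 1 := by
      intro i
      have e1 : ‖P i i‖ ^ 2 ≤ ∑ j, ‖P j i‖ ^ 2 :=
        Finset.single_le_sum (f := fun j => ‖P j i‖ ^ 2)
          (fun j _ => sq_nonneg _) (Finset.mem_univ i)
      rw [hcol i, hPii i] at e1
      rw [Complex.norm_real, Real.norm_eq_abs, abs_of_nonneg (hc0 i)] at e1
      nlinarith [hc0 i]
    have hsumc : ∑ i, c i = k := by
      have e1 : ∀ j : Fin k, (∑ i, ‖B j i‖ ^ 2) = 1 := by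
        intro j
        have e2 : (B * Bᴴ) j j = 1 := by rw [hB1, Matrix.one_apply_eq]
        rw [Matrix.mul_apply] at e2
        have e3 : ∀ i, B j i * Bᴴ i j = ((‖B j i‖ ^ 2 : ℝ) : ℂ) := by
          intro i
          rw [Matrix.conjTranspose_apply, RCLike.star_def, RCLike.mul_conj]
          norm_cast
        rw [Finset.sum_congr rfl (fun i _ => e3 i)] at e2
        push_cast at e2
        exact_mod_cast e2
      rw [hc]
      rw [Finset.sum_comm]
      rw [Finset.sum_congr rfl (fun j _ => e1 j)]
      simp
    -- the inner product
    have hT : (∑ x, star (schmidtVec μ x) * φ x)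
        = ∑ x : Fin d × Fin d, (μ x.1 : ℂ) * (M x.1 x.2 * P x.2 x.1) := by
      rw [inner_schmidt' μ φ, Fintype.sum_prod_type]
      apply Finset.sum_congr rfl
      intro i _
      rw [show φ (i, i) = (M * P) i i from by rw [hMP]; rfl, Matrix.mul_apply, Finset.mul_sum]
    have hTnorm : ‖∑ x, star (schmidtVec μ x) * φ x‖ ≤
        ∑ x : Fin d × Fin d, ‖M x.1 x.2‖ * (μ x.1 * ‖P x.2 x.1‖) := by
      rw [hT]
      refine (norm_sum_le _ _).trans (le_of_eq ?_)
      apply Finset.sum_congr rfl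
      intro x _
      rw [norm_mul, norm_mul, Complex.norm_real, Real.norm_eq_abs, abs_of_nonneg (hpos x.1)]
      ring
    have hCS : (∑ x : Fin d × Fin d, ‖M x.1 x.2‖ * (μ x.1 * ‖P x.2 x.1‖)) ^ 2 ≤
        (∑ x : Fin d × Fin d, ‖M x.1 x.2‖ ^ 2) *
        (∑ x : Fin d × Fin d, (μ x.1 * ‖P x.2 x.1‖) ^ 2) :=
      Finset.sum_mul_sq_le_sq_mul_sq _ _ _
    have hMnorm : (∑ x : Fin d × Fin d, ‖M x.1 x.2‖ ^ 2) = 1 := by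
      rw [← hφ]
      rfl
    have hgnorm : (∑ x : Fin d × Fin d, (μ x.1 * ‖P x.2 x.1‖) ^ 2) = ∑ i, μ i ^ 2 * c i := by
      rw [Fintype.sum_prod_type]
      apply Finset.sum_congr rfl
      intro i _
      rw [← hcol i, Finset.mul_sum]
      apply Finset.sum_congr rfl
      intro j _
      ring
    have hfinal : (∑ i, μ i ^ 2 * c i) ≤ S := by
      apply sum_weighted_le' hk1 hkd _ _ _ hc0 hc1 hsumc
      intro i j hij
      exact pow_le_pow_left₀ (hpos j) (hmono hij) 2
    have h01 : (0:ℝ) ≤ ∑ x : Fin d × Fin d, ‖M x.1 x.2‖ * (μ x.1 * ‖P x.2 x.1‖) :=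
      Finset.sum_nonneg fun x _ =>
        mul_nonneg (norm_nonneg _) (mul_nonneg (hpos _) (norm_nonneg _))
    calc ‖∑ x, star (schmidtVec μ x) * φ x‖ ^ 2
        ≤ (∑ x : Fin d × Fin d, ‖M x.1 x.2‖ * (μ x.1 * ‖P x.2 x.1‖)) ^ 2 :=
          pow_le_pow_left₀ (norm_nonneg _) hTnorm 2
      _ ≤ (∑ x : Fin d × Fin d, ‖M x.1 x.2‖ ^ 2) *
          (∑ x : Fin d × Fin d, (μ x.1 * ‖P x.2 x.1‖) ^ 2) := hCS
      _ = ∑ i, μ i ^ 2 * c i := by rw [hMnorm, hgnorm, one_mul]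
      _ ≤ S := hfinal
  · -- attainment
    have hd0 : 0 < d := by omega
    have hS0 : 0 < S := by
      rcases lt_or_eq_of_le (Finset.sum_nonneg fun i _ => sq_nonneg (μ i)) with h | h
      · exact h
      · exfalso
        have hall : ∀ i ∈ Finset.univ.filter (fun i : Fin d => (i : ℕ) < k), μ i ^ 2 = 0 :=
          (Finset.sum_eq_zero_iff_of_nonneg (fun i _ => sq_nonneg (μ i))).mp h.symm
        have h0mem : (⟨0, hd0⟩ : Fin d) ∈ Finset.univ.filter (fun i : Fin d => (i : ℕ) < k) := by
          simp; omega
        have hμ0 : μ ⟨0, hd0⟩ = 0 := by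
          have := hall _ h0mem
          nlinarith [this]
        have hzero : ∀ i, μ i = 0 := by
          intro i
          have h1 : μ i ≤ μ ⟨0, hd0⟩ := hmono (by simp [Fin.le_def])
          have h2 := hpos i
          rw [hμ0] at h1
          linarith
        have hz : ∑ i, μ i ^ 2 = 0 := Finset.sum_eq_zero fun i _ => by rw [hzero i]; ring
        rw [hz] at hnorm
        norm_num at hnorm
    set s := Real.sqrt S with hsdef
    have hs0 : 0 < s := Real.sqrt_pos.mpr hS0
    have hs2 : s ^ 2 = S := Real.sq_sqrt hS0.le
    set ν : Fin d → ℝ := fun i => if (i : ℕ) < k then μ i / s else 0 with hν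
    refine ⟨fun p => if p.1 = p.2 then (ν p.1 : ℂ) else 0, ?_, ?_, ?_⟩
    · -- norm 1
      rw [Fintype.sum_prod_type]
      have e1 : ∀ i : Fin d, (∑ j : Fin d, ‖if i = j then (ν i : ℂ) else 0‖ ^ 2) = ν i ^ 2 := by
        intro i
        rw [Finset.sum_eq_single i]
        · rw [if_pos rfl, Complex.norm_real, Real.norm_eq_abs, sq_abs]
        · intro j _ hji; rw [if_neg (Ne.symm hji), norm_zero]; ring
        · intro hi; exact absurd (Finset.mem_univ i) hi
      rw [Finset.sum_congr rfl (fun i _ => e1 i)]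
      have e2 : ∀ i : Fin d, ν i ^ 2 = if (i : ℕ) < k then μ i ^ 2 / S else 0 := by
        intro i
        simp only [hν]
        by_cases hik : (i : ℕ) < k
        · rw [if_pos hik, if_pos hik, div_pow, hs2]
        · rw [if_neg hik, if_neg hik]; ring
      rw [Finset.sum_congr rfl (fun i _ => e2 i), Finset.sum_ite, Finset.sum_const_zero,
        add_zero, ← Finset.sum_div]
      rw [← hSdef, div_self hS0.ne']
    · -- rank
      have hmat : matricize (fun p : Fin d × Fin d => if p.1 = p.2 then (ν p.1 : ℂ) else 0)
          = Matrix.diagonal (fun i => (ν i : ℂ)) := by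
        ext i j
        rw [matricize, Matrix.diagonal_apply]
        rfl
      rw [hmat, Matrix.rank_diagonal]
      rw [Fintype.card_subtype]
      calc (Finset.univ.filter fun i : Fin d => (ν i : ℂ) ≠ 0).card
          ≤ (Finset.univ.filter fun i : Fin d => (i : ℕ) < k).card := by
            apply Finset.card_le_card
            apply Finset.monotone_filter_right
            intro i _ hi
            by_contra hik
            apply hi
            simp only [hν, if_neg hik]
            norm_num
        _ = k := card_filter_lt' hkd
    · -- value
      rw [inner_schmidt' μ _]
      have e1 : ∀ i : Fin d, (μ i : ℂ) * (if i = i then (ν i : ℂ) else 0) = ((μ i * ν i : ℝ) : ℂ) := by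
        intro i
        rw [if_pos rfl]
        push_cast; ring
      rw [Finset.sum_congr rfl (fun i _ => e1 i), ← Complex.ofReal_sum]
      rw [Complex.norm_real, Real.norm_eq_abs, sq_abs]
      have e2 : (∑ i, μ i * ν i) = S / s := by
        have : ∀ i : Fin d, μ i * ν i = if (i : ℕ) < k then μ i ^ 2 / s else 0 := by
          intro i
          simp only [hν]
          by_cases hik : (i : ℕ) < k
          · rw [if_pos hik, if_pos hik]; ring
          · rw [if_neg hik, if_neg hik]; ring
        rw [Finset.sum_congr rfl (fun i _ => this i), Finset.sum_ite, Finset.sum_const_zero,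
          add_zero, ← Finset.sum_div, ← hSdef]
      rw [e2]
      rw [div_pow, hs2]
      field_simp
end

section
/- Let d ≥ 2, let ρ be a matrix on ℂ^d ⊗ ℂ^d which is positive semidefinite with trace 1 and whose partial transpose ρ^Γ is positive semidefinite (ρ is a PPT state), and let A be a complex d×d matrix with Tr(AᴴA) = 1. Define the unit vector ψ ∈ ℂ^d ⊗ ℂ^d by ψ[(i,j)] = A[i,j] (so that ψ = √d (A⊗I)Ψ⁺_d, and the largest Schmidt coefficient of ψ is the operator norm ‖A‖). Then ⟨ψ, ρ ψ⟩ ≤ ‖A‖², the square of the operator norm of A. (Hence the witness W_1(ψ) = I − (1/μ_1²)|ψ⟩⟨ψ|, with μ_1 the largest Schmidt coefficient of ψ, cannot detect any PPT state.) -/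
open Matrix BigOperators
open scoped ComplexOrder

/-- Partial transpose with respect to the first tensor factor:
`X^Γ[(i,j),(k,l)] = X[(k,j),(i,l)]`. -/
def ptg {A B : Type*} (X : Matrix (A × B) (A × B) ℂ) : Matrix (A × B) (A × B) ℂ :=
  Matrix.of fun p q => X (q.1, p.2) (p.1, q.2)

/-- The ℓ²→ℓ² operator norm bound for `mulVec`, in coordinates. -/
lemma v1_aux {d : ℕ} (A : Matrix (Fin d) (Fin d) ℂ) (x : Fin d → ℂ) :
    ∑ k, ‖(A *ᵥ x) k‖ ^ 2
      ≤ ‖Matrix.toEuclideanCLM (𝕜 := ℂ) A‖ ^ 2 * ∑ l, ‖x l‖ ^ 2 := by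
  have h := (Matrix.toEuclideanCLM (𝕜 := ℂ) A).le_opNorm ((WithLp.equiv 2 _).symm x)
  change ‖(WithLp.equiv 2 (Fin d → ℂ)).symm (A *ᵥ x)‖ ≤ _ * ‖(WithLp.equiv 2 (Fin d → ℂ)).symm x‖ at h
  have key : ∀ y : Fin d → ℂ,
      ‖(WithLp.equiv 2 (Fin d → ℂ)).symm y‖ ^ 2 = ∑ i, ‖y i‖ ^ 2 := by
    intro y
    rw [EuclideanSpace.norm_eq, Real.sq_sqrt (by positivity)]
    simp [WithLp.equiv_symm_apply]
  have h2 := pow_le_pow_left₀ (norm_nonneg _) h 2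
  rw [mul_pow, key, key] at h2
  exact h2

set_option maxHeartbeats 1000000 in
set_option synthInstance.maxHeartbeats 200000 in
theorem ppt_state_overlap_le_opNorm_sq {d : ℕ} (hd : 2 ≤ d)
    (ρ : Matrix (Fin d × Fin d) (Fin d × Fin d) ℂ)
    (hρ : ρ.PosSemidef) (hρtr : ρ.trace = 1) (hppt : (ptg ρ).PosSemidef)
    (A : Matrix (Fin d) (Fin d) ℂ) (hA : (Aᴴ * A).trace = 1) :
    (star (fun p : Fin d × Fin d => A p.1 p.2) ⬝ᵥ
        ρ.mulVec (fun p : Fin d × Fin d => A p.1 p.2)).re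
      ≤ ‖Matrix.toEuclideanCLM (𝕜 := ℂ) A‖ ^ 2 := by
  obtain ⟨B, hB⟩ : ∃ B, ptg ρ = Bᴴ * B := by
    open MatrixOrder in exact CStarAlgebra.nonneg_iff_eq_star_mul_self.mp hppt.nonneg
  have hρ' : ∀ m n : Fin d × Fin d,
      ρ m n = ∑ t, (starRingEnd ℂ) (B t (n.1, m.2)) * B t (m.1, n.2) := by
    intro m n
    have h1 : ρ m n = ptg ρ (n.1, m.2) (m.1, n.2) := rfl
    rw [h1, hB, Matrix.mul_apply]
    simp [Matrix.conjTranspose_apply]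
  set g : (Fin d × Fin d) → Fin d → Fin d → ℂ :=
    fun t i k => ∑ l, A k l * B t (i, l) with hg
  -- the identity
  have hident : (star (fun p : Fin d × Fin d => A p.1 p.2) ⬝ᵥ
        ρ.mulVec (fun p : Fin d × Fin d => A p.1 p.2))
      = ∑ t, ∑ i, ∑ k, (starRingEnd ℂ) (g t k i) * g t i k := by
    have e1 : (star (fun p : Fin d × Fin d => A p.1 p.2) ⬝ᵥ
        ρ.mulVec (fun p : Fin d × Fin d => A p.1 p.2))
        = ∑ m : Fin d × Fin d, ∑ n : Fin d × Fin d, ∑ t : Fin d × Fin d,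
            (starRingEnd ℂ) (A m.1 m.2) *
              ((starRingEnd ℂ) (B t (n.1, m.2)) * B t (m.1, n.2) * A n.1 n.2) := by
      simp only [dotProduct, Matrix.mulVec, dotProduct, Pi.star_apply, Complex.star_def]
      refine Finset.sum_congr rfl fun m _ => ?_
      rw [Finset.mul_sum]
      refine Finset.sum_congr rfl fun n _ => ?_
      rw [hρ', Finset.sum_mul, Finset.mul_sum]
    rw [e1]
    have e2 : ∀ m : Fin d × Fin d, (∑ n : Fin d × Fin d, ∑ t : Fin d × Fin d,
            (starRingEnd ℂ) (A m.1 m.2) *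
              ((starRingEnd ℂ) (B t (n.1, m.2)) * B t (m.1, n.2) * A n.1 n.2))
        = ∑ t : Fin d × Fin d, ∑ n : Fin d × Fin d,
            (starRingEnd ℂ) (A m.1 m.2) *
              ((starRingEnd ℂ) (B t (n.1, m.2)) * B t (m.1, n.2) * A n.1 n.2) :=
      fun m => Finset.sum_comm
    rw [Finset.sum_congr rfl (fun m _ => e2 m), Finset.sum_comm]
    refine Finset.sum_congr rfl fun t _ => ?_
    simp only [Fintype.sum_prod_type]
    refine Finset.sum_congr rfl fun i _ => ?_
    rw [Finset.sum_comm]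
    refine Finset.sum_congr rfl fun k _ => ?_
    have hgk : g t k i = ∑ j, A i j * B t (k, j) := rfl
    have hgik : g t i k = ∑ l, A k l * B t (i, l) := rfl
    rw [hgk, hgik, map_sum, Finset.sum_mul]
    refine Finset.sum_congr rfl fun j _ => ?_
    rw [Finset.mul_sum]
    refine Finset.sum_congr rfl fun l _ => ?_
    rw [_root_.map_mul]
    ring
  rw [hident]
  set C : ℝ := ‖Matrix.toEuclideanCLM (𝕜 := ℂ) A‖ with hC
  -- real part bound
  have hre : (∑ t, ∑ i, ∑ k, (starRingEnd ℂ) (g t k i) * g t i k).re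
      ≤ ∑ t : Fin d × Fin d, ∑ i, ∑ k, ‖g t i k‖ ^ 2 := by
    have step1 : (∑ t, ∑ i, ∑ k, (starRingEnd ℂ) (g t k i) * g t i k).re
        ≤ ∑ t : Fin d × Fin d, ∑ i, ∑ k, (‖g t k i‖ ^ 2 + ‖g t i k‖ ^ 2) / 2 := by
      simp only [Complex.re_sum]
      refine Finset.sum_le_sum fun t _ => Finset.sum_le_sum fun i _ =>
        Finset.sum_le_sum fun k _ => ?_
      have h1 : ((starRingEnd ℂ) (g t k i) * g t i k).re
          ≤ ‖g t k i‖ * ‖g t i k‖ := by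
        calc ((starRingEnd ℂ) (g t k i) * g t i k).re
            ≤ ‖(starRingEnd ℂ) (g t k i) * g t i k‖ := Complex.re_le_norm _
          _ = ‖g t k i‖ * ‖g t i k‖ := by
              rw [norm_mul, RCLike.norm_conj]
      nlinarith [sq_nonneg (‖g t k i‖ - ‖g t i k‖)]
    refine step1.trans (le_of_eq ?_)
    refine Finset.sum_congr rfl fun t _ => ?_
    have swap : ∑ i, ∑ k, ‖g t k i‖ ^ 2 = ∑ i, ∑ k, ‖g t i k‖ ^ 2 := Finset.sum_comm
    have hsum : ∑ i, ∑ k, (‖g t k i‖ ^ 2 + ‖g t i k‖ ^ 2)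
        = 2 * ∑ i, ∑ k, ‖g t i k‖ ^ 2 := by
      simp only [Finset.sum_add_distrib]
      rw [swap]; ring
    simp only [← Finset.sum_div]
    rw [hsum]; ring
  refine hre.trans ?_
  -- apply the operator-norm bound row by row
  have hrow : ∀ (t : Fin d × Fin d) (i : Fin d),
      ∑ k, ‖g t i k‖ ^ 2 ≤ C ^ 2 * ∑ l, ‖B t (i, l)‖ ^ 2 := by
    intro t i
    have h := v1_aux A (fun l => B t (i, l))
    have hgv : ∀ k, g t i k = (A *ᵥ fun l => B t (i, l)) k := by
      intro k; simp [hg, Matrix.mulVec, dotProduct]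
    simp only [hgv]
    exact h
  -- the trace normalisation
  have htr : ∑ t : Fin d × Fin d, ∑ i, ∑ l, ‖B t (i, l)‖ ^ 2 = 1 := by
    have h1 : (ptg ρ).trace = 1 := by
      rw [← hρtr]
      simp [Matrix.trace, ptg, Matrix.diag]
    rw [hB] at h1
    have hz : ∀ z : ℂ, (starRingEnd ℂ) z * z = ((‖z‖ ^ 2 : ℝ) : ℂ) := by
      intro z
      rw [mul_comm, Complex.mul_conj, Complex.normSq_eq_norm_sq]
    have h2 : (Bᴴ * B).trace
        = ((∑ p : Fin d × Fin d, ∑ t : Fin d × Fin d, ‖B t p‖ ^ 2 : ℝ) : ℂ) := by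
      simp only [Matrix.trace, Matrix.diag, Matrix.mul_apply, Matrix.conjTranspose_apply,
        Complex.star_def, hz]
      push_cast
      rfl
    rw [h2] at h1
    have h3 : (∑ p : Fin d × Fin d, ∑ t : Fin d × Fin d, ‖B t p‖ ^ 2 : ℝ) = 1 := by
      exact_mod_cast h1
    rw [Finset.sum_comm] at h3
    rw [← h3]
    refine Finset.sum_congr rfl fun t _ => ?_
    rw [Fintype.sum_prod_type]
  calc ∑ t : Fin d × Fin d, ∑ i, ∑ k, ‖g t i k‖ ^ 2
      ≤ ∑ t : Fin d × Fin d, ∑ i, C ^ 2 * ∑ l, ‖B t (i, l)‖ ^ 2 :=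
        Finset.sum_le_sum fun t _ => Finset.sum_le_sum fun i _ => hrow t i
    _ = C ^ 2 * ∑ t : Fin d × Fin d, ∑ i, ∑ l, ‖B t (i, l)‖ ^ 2 := by
        simp [Finset.mul_sum]
    _ = C ^ 2 := by rw [htr, mul_one]
end

section
/- Let k ≥ 2 and let Λ : Matrix (Fin n) (Fin n) ℂ →ₗ Matrix (Fin m) (Fin m) ℂ be a linear map which is k-positive. Then Λ is completely positive if and only if the extension id_k ⊗ Λ is decomposable. -/
open Matrix BigOperators
open scoped ComplexOrder

/-- The ampliation `id_s ⊗ Φ` of a map between matrix algebras, acting blockwise: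
`((id_s ⊗ Φ) X)[(i,a),(j,b)] = (Φ X_{ij})[a,b]` where `X_{ij}[a,b] = X[(i,a),(j,b)]`. -/
def amplG {I J : Type*} (s : ℕ) (Φ : Matrix I I ℂ → Matrix J J ℂ) :
    Matrix (Fin s × I) (Fin s × I) ℂ → Matrix (Fin s × J) (Fin s × J) ℂ :=
  fun X => Matrix.of fun p q => Φ (Matrix.of fun a b => X (p.1, a) (q.1, b)) p.2 q.2

/-- A map between matrix algebras is positive if it sends positive semidefinite
matrices to positive semidefinite matrices. -/
def IsPosMap {I J : Type*} [Fintype I] [Fintype J]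
    (Φ : Matrix I I ℂ → Matrix J J ℂ) : Prop :=
  ∀ X : Matrix I I ℂ, X.PosSemidef → (Φ X).PosSemidef

/-- A map is completely positive if all its ampliations `id_s ⊗ Φ`, `s ≥ 1`,
are positive. -/
def IsCP {I J : Type*} [Fintype I] [Fintype J]
    (Φ : Matrix I I ℂ → Matrix J J ℂ) : Prop :=
  ∀ s : ℕ, 1 ≤ s → IsPosMap (amplG s Φ)

/-- A linear map `Φ` between matrix algebras is decomposable if `Φ = Φ₁ + Φ₂ ∘ T`
with `Φ₁`, `Φ₂` completely positive and `T` the transposition. -/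
def IsDecomposableMap {I J : Type*} [Fintype I] [Fintype J]
    (Φ : Matrix I I ℂ → Matrix J J ℂ) : Prop :=
  ∃ Φ₁ Φ₂ : Matrix I I ℂ →ₗ[ℂ] Matrix J J ℂ,
    IsCP (Φ₁ : Matrix I I ℂ → Matrix J J ℂ) ∧
    IsCP (Φ₂ : Matrix I I ℂ → Matrix J J ℂ) ∧
    ∀ X : Matrix I I ℂ, Φ X = Φ₁ X + Φ₂ Xᵀ

namespace AuxCP

variable {I J : Type*} [Fintype I] [Fintype J] [DecidableEq I] [DecidableEq J]

/-- The Choi matrix of a linear map between matrix algebras. -/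
noncomputable def choi (Φ : Matrix I I ℂ →ₗ[ℂ] Matrix J J ℂ) : Matrix (I × J) (I × J) ℂ :=
  Matrix.of fun p q => Φ (Matrix.single p.1 q.1 1) p.2 q.2

lemma choiFormula (Φ : Matrix I I ℂ →ₗ[ℂ] Matrix J J ℂ) (X : Matrix I I ℂ) (p q : J) :
    Φ X p q = ∑ a : I, ∑ b : I, X a b * choi Φ (a, p) (b, q) := by
  have hX : X = ∑ a : I, ∑ b : I, (X a b) • Matrix.single a b (1:ℂ) := by
    conv_lhs => rw [matrix_eq_sum_single X]
    refine Finset.sum_congr rfl fun a _ => Finset.sum_congr rfl fun b _ => ?_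
    rw [smul_single, smul_eq_mul, mul_one]
  conv_lhs => rw [hX]
  rw [map_sum, Matrix.sum_apply]
  refine Finset.sum_congr rfl fun a _ => ?_
  rw [map_sum, Matrix.sum_apply]
  refine Finset.sum_congr rfl fun b _ => ?_
  rw [_root_.map_smul]
  simp [choi, smul_eq_mul]

lemma psd_diag_nonneg {ι : Type*} [Fintype ι] [DecidableEq ι] {M : Matrix ι ι ℂ}
    (h : M.PosSemidef) (s : ι) : 0 ≤ M s s := by
  have := h.dotProduct_mulVec_nonneg (Pi.single s 1)
  simpa [dotProduct, mulVec, Pi.single_apply, apply_ite (star : ℂ → ℂ),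
    Finset.sum_ite_eq', mul_ite, ite_mul] using this

lemma psd_two_point {ι : Type*} [Fintype ι] [DecidableEq ι] {M : Matrix ι ι ℂ}
    (h : M.PosSemidef) {s t : ι} (hst : s ≠ t) :
    0 ≤ M s s - M s t - M t s + M t t := by
  have h2 := h.dotProduct_mulVec_nonneg (fun u => (if u = s then 1 else 0) - (if u = t then 1 else 0))
  have : star (fun u => (if u = s then (1:ℂ) else 0) - (if u = t then 1 else 0)) ⬝ᵥ
      M *ᵥ (fun u => (if u = s then 1 else 0) - (if u = t then 1 else 0))
      = M s s - M s t - M t s + M t t := by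
    simp [dotProduct, mulVec, sub_mul, mul_sub, apply_ite (star : ℂ → ℂ), mul_ite, ite_mul,
      Finset.sum_sub_distrib, Finset.sum_ite_eq', hst, hst.symm]
    ring
  rw [this] at h2
  exact h2

lemma psd_eq_mul_self {ι : Type*} [Fintype ι] [DecidableEq ι] {M : Matrix ι ι ℂ}
    (h : M.PosSemidef) : ∃ D : Matrix ι ι ℂ, M = Dᴴ * D := by
  open scoped MatrixOrder in
  obtain ⟨D, hD⟩ := CStarAlgebra.nonneg_iff_eq_star_mul_self.mp h.nonneg
  exact ⟨D, hD⟩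

lemma sum_normSq_eq_zero {ι : Type*} [Fintype ι] {f : ι → ℂ}
    (h : ∑ i : ι, (starRingEnd ℂ) (f i) * f i = 0) (i : ι) : f i = 0 := by
  have h' : ∑ j : ι, (Complex.normSq (f j) : ℂ) = 0 := by
    rw [← h]
    refine Finset.sum_congr rfl fun j _ => ?_
    rw [mul_comm, Complex.mul_conj]
  have h'' : ∑ j : ι, Complex.normSq (f j) = 0 := by
    have := congrArg Complex.re h'
    simpa using this
  have := (Finset.sum_eq_zero_iff_of_nonneg (fun j _ => Complex.normSq_nonneg (f j))).mp h''
    i (Finset.mem_univ i)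
  exact Complex.normSq_eq_zero.mp this

/-- If a diagonal entry of `Wᴴ * W` vanishes then the corresponding column of `W` is zero. -/
lemma col_zero_of_diag_zero {ι : Type*} [Fintype ι] {W : Matrix ι ι ℂ} {s : ι}
    (h : (Wᴴ * W) s s = 0) (α : ι) : W α s = 0 := by
  apply sum_normSq_eq_zero (f := fun α => W α s)
  rw [← h, Matrix.mul_apply]
  rfl

lemma outer_posSemidef {ι : Type*} [Fintype ι] (v : ι → ℂ) :
    (Matrix.of fun p q => v p * star (v q)).PosSemidef := by
  refine Matrix.PosSemidef.of_dotProduct_mulVec_nonneg ?_ ?_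
  · ext p q
    simp [conjTranspose_apply, mul_comm]
  · intro x
    have hq : star x ⬝ᵥ (Matrix.of fun p q => v p * star (v q)) *ᵥ x
        = star (∑ q, star (v q) * x q) * (∑ q, star (v q) * x q) := by
      simp only [dotProduct, mulVec, Matrix.of_apply, star_sum, StarMul.star_mul, star_star]
      rw [Finset.sum_mul]
      refine Finset.sum_congr rfl fun p _ => ?_
      rw [Finset.mul_sum, Finset.mul_sum]
      refine Finset.sum_congr rfl fun q _ => ?_
      simp only [Pi.star_apply]
      ring
    rw [hq]
    exact star_mul_self_nonneg _

lemma choi_psd_of_isCP (Φ : Matrix I I ℂ →ₗ[ℂ] Matrix J J ℂ)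
    (h : IsCP (Φ : Matrix I I ℂ → Matrix J J ℂ)) : (choi Φ).PosSemidef := by
  rcases isEmpty_or_nonempty I with hI | hI
  · refine Matrix.PosSemidef.of_dotProduct_mulVec_nonneg ?_ ?_
    · ext p q
      exact hI.elim p.1
    · intro x
      simp [dotProduct, Finset.univ_eq_empty]
  · set s := Fintype.card I with hs
    have hs1 : 1 ≤ s := Fintype.card_pos
    let e : Fin s ≃ I := (Fintype.equivFin I).symm
    set v : Fin s × I → ℂ := fun p => if e p.1 = p.2 then 1 else 0 with hv
    set X : Matrix (Fin s × I) (Fin s × I) ℂ := Matrix.of fun p q => v p * star (v q) with hX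
    have hXpsd : X.PosSemidef := outer_posSemidef v
    have hpsd := h s hs1 X hXpsd
    have key : choi Φ = (amplG s (Φ : Matrix I I ℂ → Matrix J J ℂ) X).submatrix
        (fun r : I × J => ((e.symm r.1, r.2) : Fin s × J))
        (fun r : I × J => ((e.symm r.1, r.2) : Fin s × J)) := by
      ext ⟨a, p⟩ ⟨b, q⟩
      show Φ (Matrix.single a b 1) p q = Φ (Matrix.of fun c d => X (e.symm a, c) (e.symm b, d)) p q
      have hblock : (Matrix.of fun c d => X (e.symm a, c) (e.symm b, d)) = Matrix.single a b (1:ℂ) := by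
        ext c d
        simp only [Matrix.of_apply, hX, hv, Equiv.apply_symm_apply, Matrix.single]
        by_cases h1 : a = c <;> by_cases h2 : b = d <;> simp [h1, h2]
      rw [hblock]
    rw [key]
    exact hpsd.submatrix _


lemma ampl_eq_sum_kraus (Φ : Matrix I I ℂ →ₗ[ℂ] Matrix J J ℂ) (s : ℕ)
    (D : Matrix (I × J) (I × J) ℂ) (hD : choi Φ = Dᴴ * D)
    (X : Matrix (Fin s × I) (Fin s × I) ℂ) :
    amplG s (Φ : Matrix I I ℂ → Matrix J J ℂ) X = ∑ r : I × J,
      (Matrix.of fun (p : Fin s × J) (a : Fin s × I) =>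
        if p.1 = a.1 then star (D r (a.2, p.2)) else 0) * X *
      (Matrix.of fun (p : Fin s × J) (a : Fin s × I) =>
        if p.1 = a.1 then star (D r (a.2, p.2)) else 0)ᴴ := by
  ext ⟨i, p⟩ ⟨j, q⟩
  show Φ (Matrix.of fun a b => X (i, a) (j, b)) p q = _
  rw [choiFormula, Matrix.sum_apply]
  have rhs : ∀ r : I × J,
      ((Matrix.of fun (p : Fin s × J) (a : Fin s × I) =>
        if p.1 = a.1 then star (D r (a.2, p.2)) else 0) * X *
      (Matrix.of fun (p : Fin s × J) (a : Fin s × I) =>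
        if p.1 = a.1 then star (D r (a.2, p.2)) else 0)ᴴ) (i, p) (j, q)
      = ∑ a : I, ∑ b : I, X (i, a) (j, b) * (star (D r (a, p)) * D r (b, q)) := by
    intro r
    have star_if : ∀ (P : Prop) [Decidable P] (x : ℂ),
        star (if P then x else 0) = if P then star x else 0 := by
      intro P _ x; split <;> simp
    simp only [Matrix.mul_apply, conjTranspose_apply, Matrix.of_apply, Fintype.sum_prod_type,
      ite_mul, zero_mul, mul_ite, mul_zero, star_if, star_zero, star_star,
      Finset.sum_const_zero, Finset.sum_ite_irrel, Finset.sum_ite_eq, Finset.sum_ite_eq',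
      Finset.mem_univ, if_true, Finset.sum_mul, Finset.mul_sum]
    rw [Finset.sum_comm]
    refine Finset.sum_congr rfl fun a _ => Finset.sum_congr rfl fun b _ => ?_
    ring
  calc ∑ a : I, ∑ b : I, (Matrix.of fun a b => X (i, a) (j, b)) a b * choi Φ (a, p) (b, q)
      = ∑ a : I, ∑ b : I, ∑ r : I × J, X (i, a) (j, b) * (star (D r (a, p)) * D r (b, q)) := by
        refine Finset.sum_congr rfl fun a _ => Finset.sum_congr rfl fun b _ => ?_
        rw [hD, Matrix.mul_apply, Finset.mul_sum]
        exact Finset.sum_congr rfl fun r _ => by rw [conjTranspose_apply, Matrix.of_apply]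
    _ = ∑ a : I, ∑ r : I × J, ∑ b : I, X (i, a) (j, b) * (star (D r (a, p)) * D r (b, q)) := by
        exact Finset.sum_congr rfl fun a _ => Finset.sum_comm
    _ = ∑ r : I × J, ∑ a : I, ∑ b : I, X (i, a) (j, b) * (star (D r (a, p)) * D r (b, q)) :=
        Finset.sum_comm
    _ = _ := by
        exact (Finset.sum_congr rfl fun r _ => (rhs r).symm)

lemma isPosMap_ampl_of_choi_psd (Φ : Matrix I I ℂ →ₗ[ℂ] Matrix J J ℂ)
    (h : (choi Φ).PosSemidef) (s : ℕ) :
    IsPosMap (amplG s (Φ : Matrix I I ℂ → Matrix J J ℂ)) := by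
  obtain ⟨D, hD⟩ := AuxCP.psd_eq_mul_self h
  intro X hX
  rw [ampl_eq_sum_kraus Φ s D hD X]
  refine Finset.sum_induction _ _ (fun a b ha hb => ha.add hb) Matrix.PosSemidef.zero
    (fun r _ => hX.mul_mul_conjTranspose_same _)

lemma isCP_of_choi_psd (Φ : Matrix I I ℂ →ₗ[ℂ] Matrix J J ℂ)
    (h : (choi Φ).PosSemidef) : IsCP (Φ : Matrix I I ℂ → Matrix J J ℂ) :=
  fun s _ => isPosMap_ampl_of_choi_psd Φ h s


/-- The ampliation as a linear map. -/
def amplL {I J : Type*} [Fintype I] [Fintype J] (s : ℕ)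
    (Φ : Matrix I I ℂ →ₗ[ℂ] Matrix J J ℂ) :
    Matrix (Fin s × I) (Fin s × I) ℂ →ₗ[ℂ] Matrix (Fin s × J) (Fin s × J) ℂ where
  toFun := amplG s (Φ : Matrix I I ℂ → Matrix J J ℂ)
  map_add' X Y := by
    ext ⟨i, p⟩ ⟨j, q⟩
    show Φ (Matrix.of fun a b => (X + Y) (i, a) (j, b)) p q = _
    have hb : (Matrix.of fun a b => (X + Y) (i, a) (j, b)) =
        (Matrix.of fun a b => X (i, a) (j, b)) + (Matrix.of fun a b => Y (i, a) (j, b)) := rfl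
    rw [hb, map_add]
    rfl
  map_smul' c X := by
    ext ⟨i, p⟩ ⟨j, q⟩
    show Φ (Matrix.of fun a b => (c • X) (i, a) (j, b)) p q = _
    have hb : (Matrix.of fun a b => (c • X) (i, a) (j, b)) =
        c • (Matrix.of fun a b => X (i, a) (j, b)) := rfl
    rw [hb, _root_.map_smul]
    rfl

lemma block_std {I K : Type*} [DecidableEq I] [DecidableEq K] (i j x y : K) (a b : I) :
    (Matrix.of fun c d => Matrix.single ((i, a) : K × I) (j, b) (1:ℂ) (x, c) (y, d)) =
      if x = i ∧ y = j then Matrix.single a b 1 else 0 := by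
  ext c d
  simp only [Matrix.of_apply, Matrix.single, Prod.mk.injEq]
  by_cases h1 : x = i <;> by_cases h2 : y = j <;>
    simp [h1, h2, and_assoc, and_comm, and_left_comm] <;> tauto

lemma choi_amplL_entry (s : ℕ) (Φ : Matrix I I ℂ →ₗ[ℂ] Matrix J J ℂ)
    (i x : Fin s) (a : I) (p : J) (j y : Fin s) (b : I) (q : J) :
    choi (amplL s Φ) ((i, a), (x, p)) ((j, b), (y, q)) =
      if x = i ∧ y = j then choi Φ (a, p) (b, q) else 0 := by
  show (amplL s Φ) (Matrix.single (i, a) (j, b) 1) (x, p) (y, q) = _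
  show Φ (Matrix.of fun c d => Matrix.single ((i, a) : Fin s × I) (j, b) (1:ℂ) (x, c) (y, d)) p q = _
  rw [block_std]
  rw [apply_ite (Φ : Matrix I I ℂ → Matrix J J ℂ), map_zero]
  by_cases h : x = i ∧ y = j <;> simp [h, choi]

lemma choi_amplL_psd (s : ℕ) (Φ : Matrix I I ℂ →ₗ[ℂ] Matrix J J ℂ)
    (h : (choi Φ).PosSemidef) : (choi (amplL s Φ)).PosSemidef := by
  obtain ⟨D, hD⟩ := AuxCP.psd_eq_mul_self h
  set W : Matrix (I × J) ((Fin s × I) × (Fin s × J)) ℂ :=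
    Matrix.of fun r c => (if c.2.1 = c.1.1 then 1 else 0) * D r (c.1.2, c.2.2) with hW
  have key : choi (amplL s Φ) = Wᴴ * W := by
    ext ⟨⟨i, a⟩, ⟨x, p⟩⟩ ⟨⟨j, b⟩, ⟨y, q⟩⟩
    rw [choi_amplL_entry, Matrix.mul_apply]
    simp only [conjTranspose_apply, hW, Matrix.of_apply, StarMul.star_mul]
    by_cases h1 : x = i <;> by_cases h2 : y = j <;>
      simp [h1, h2, hD, Matrix.mul_apply, conjTranspose_apply, mul_comm, mul_assoc, mul_left_comm]
  rw [key]
  exact Matrix.posSemidef_conjTranspose_mul_self W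

end AuxCP

theorem kPositive_CP_iff_ampliation_decomposable {n m k : ℕ} (hk : 2 ≤ k)
    (Λ : Matrix (Fin n) (Fin n) ℂ →ₗ[ℂ] Matrix (Fin m) (Fin m) ℂ)
    (hkpos : IsPosMap (amplG k (Λ : Matrix (Fin n) (Fin n) ℂ → Matrix (Fin m) (Fin m) ℂ))) :
    IsCP (Λ : Matrix (Fin n) (Fin n) ℂ → Matrix (Fin m) (Fin m) ℂ) ↔
      IsDecomposableMap
        (amplG k (Λ : Matrix (Fin n) (Fin n) ℂ → Matrix (Fin m) (Fin m) ℂ)) := by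
  constructor
  · intro hcp
    refine ⟨AuxCP.amplL k Λ, 0, ?_, ?_, ?_⟩
    · exact AuxCP.isCP_of_choi_psd _ (AuxCP.choi_amplL_psd k Λ (AuxCP.choi_psd_of_isCP Λ hcp))
    · intro s hs X hX
      have h0 : amplG s ((0 : Matrix (Fin k × Fin n) (Fin k × Fin n) ℂ →ₗ[ℂ]
          Matrix (Fin k × Fin m) (Fin k × Fin m) ℂ) :
          Matrix (Fin k × Fin n) (Fin k × Fin n) ℂ → Matrix (Fin k × Fin m) (Fin k × Fin m) ℂ) X
          = 0 := by
        ext p q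
        simp [amplG]
      rw [h0]
      exact Matrix.PosSemidef.zero
    · intro X
      simp [AuxCP.amplL]
  · rintro ⟨Φ₁, Φ₂, h₁, h₂, hdec⟩
    have hA := AuxCP.choi_psd_of_isCP Φ₁ h₁
    have hB := AuxCP.choi_psd_of_isCP Φ₂ h₂
    set A := AuxCP.choi Φ₁ with hAdef
    set B := AuxCP.choi Φ₂ with hBdef
    have hstdT : ∀ (r c : Fin k × Fin n),
        (Matrix.single r c (1:ℂ))ᵀ = Matrix.single c r 1 := by
      intro r c
      ext u v
      simp only [transpose_apply, Matrix.single, Matrix.of_apply]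
      by_cases h1 : r = v <;> by_cases h2 : c = u <;> simp [h1, h2] <;> tauto
    have key : ∀ (i j : Fin k) (a b : Fin n) (x y : Fin k) (p q : Fin m),
        (if x = i ∧ y = j then AuxCP.choi Λ (a, p) (b, q) else 0) =
          A ((i, a), (x, p)) ((j, b), (y, q)) + B ((j, b), (x, p)) ((i, a), (y, q)) := by
      intro i j a b x y p q
      have h := congrFun (congrFun (hdec (Matrix.single (i, a) (j, b) 1)) (x, p)) (y, q)
      have hL : amplG k (Λ : Matrix (Fin n) (Fin n) ℂ → Matrix (Fin m) (Fin m) ℂ)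
          (Matrix.single (i, a) (j, b) 1) (x, p) (y, q)
          = if x = i ∧ y = j then AuxCP.choi Λ (a, p) (b, q) else 0 := by
        show Λ (Matrix.of fun c d =>
          Matrix.single ((i, a) : Fin k × Fin n) (j, b) (1:ℂ) (x, c) (y, d)) p q = _
        rw [AuxCP.block_std, apply_ite (Λ : Matrix (Fin n) (Fin n) ℂ → Matrix (Fin m) (Fin m) ℂ),
          map_zero]
        by_cases hc : x = i ∧ y = j <;> simp [hc, AuxCP.choi]
      rw [hL, hstdT] at h
      exact h
    obtain ⟨W, hWB⟩ := AuxCP.psd_eq_mul_self hB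
    have step1 : ∀ (i x : Fin k) (a : Fin n) (p : Fin m), x ≠ i →
        B ((i, a), (x, p)) ((i, a), (x, p)) = 0 := by
      intro i x a p hx
      have hkey := key i i a a x x p p
      rw [if_neg (by tauto)] at hkey
      have h1 := AuxCP.psd_diag_nonneg hA (((i, a), (x, p)))
      have h2 := AuxCP.psd_diag_nonneg hB (((i, a), (x, p)))
      have h3 : B ((i, a), (x, p)) ((i, a), (x, p)) =
          - A ((i, a), (x, p)) ((i, a), (x, p)) := by linear_combination -hkey
      exact le_antisymm (h3 ▸ neg_nonpos.mpr h1) h2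
    have stepW1 : ∀ (s : (Fin k × Fin n) × (Fin k × Fin m)), s.2.1 ≠ s.1.1 →
        ∀ α, W α s = 0 := by
      rintro ⟨⟨i, a⟩, ⟨x, p⟩⟩ hs α
      exact AuxCP.col_zero_of_diag_zero (by rw [← hWB]; exact step1 i x a p hs) α
    have step3 : ∀ (i : Fin k) (a : Fin n) (p : Fin m),
        B ((i, a), (i, p)) ((i, a), (i, p)) = 0 := by
      intro i a p
      obtain ⟨j, hj⟩ : ∃ j : Fin k, j ≠ i := by
        rcases eq_or_ne i ⟨0, by omega⟩ with h | h
        · exact ⟨⟨1, by omega⟩, by simp [h, Fin.ext_iff]⟩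
        · exact ⟨⟨0, by omega⟩, fun hc => h (hc ▸ rfl)⟩
      have hij : i ≠ j := hj.symm
      set C₀ := AuxCP.choi Λ (a, p) (a, p) with hC₀
      have h2p := AuxCP.psd_two_point hA
        (s := (((i, a), (i, p)) : (Fin k × Fin n) × (Fin k × Fin m)))
        (t := ((j, a), (j, p))) (by simp [Prod.ext_iff, hij])
      have e00 : A ((i, a), (i, p)) ((i, a), (i, p)) =
          C₀ - B ((i, a), (i, p)) ((i, a), (i, p)) := by
        have hkey := key i i a a i i p p
        rw [if_pos ⟨rfl, rfl⟩] at hkey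
        linear_combination -hkey
      have e11 : A ((j, a), (j, p)) ((j, a), (j, p)) =
          C₀ - B ((j, a), (j, p)) ((j, a), (j, p)) := by
        have hkey := key j j a a j j p p
        rw [if_pos ⟨rfl, rfl⟩] at hkey
        linear_combination -hkey
      have e01 : A ((i, a), (i, p)) ((j, a), (j, p)) = C₀ := by
        have hkey := key i j a a i j p p
        rw [if_pos ⟨rfl, rfl⟩] at hkey
        have hz : B ((j, a), (i, p)) ((i, a), (j, p)) = 0 := by
          rw [hWB, Matrix.mul_apply]
          exact Finset.sum_eq_zero fun α _ => by
            rw [conjTranspose_apply, stepW1 ((j, a), (i, p)) hij α, star_zero, zero_mul]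
        rw [hz, add_zero] at hkey
        exact hkey.symm
      have e10 : A ((j, a), (j, p)) ((i, a), (i, p)) = C₀ := by
        have hkey := key j i a a j i p p
        rw [if_pos ⟨rfl, rfl⟩] at hkey
        have hz : B ((i, a), (j, p)) ((j, a), (i, p)) = 0 := by
          rw [hWB, Matrix.mul_apply]
          exact Finset.sum_eq_zero fun α _ => by
            rw [conjTranspose_apply, stepW1 ((i, a), (j, p)) hj α, star_zero, zero_mul]
        rw [hz, add_zero] at hkey
        exact hkey.symm
      rw [e00, e01, e10, e11] at h2p
      have h2p' : 0 ≤ -(B ((i, a), (i, p)) ((i, a), (i, p)) +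
          B ((j, a), (j, p)) ((j, a), (j, p))) := by
        convert h2p using 1
        ring
      have hsum : B ((i, a), (i, p)) ((i, a), (i, p)) +
          B ((j, a), (j, p)) ((j, a), (j, p)) ≤ 0 := neg_nonneg.mp h2p'
      have hB0 := AuxCP.psd_diag_nonneg hB (((i, a), (i, p)))
      have hB1 := AuxCP.psd_diag_nonneg hB (((j, a), (j, p)))
      refine le_antisymm ?_ hB0
      calc B ((i, a), (i, p)) ((i, a), (i, p))
          ≤ B ((i, a), (i, p)) ((i, a), (i, p)) +
            B ((j, a), (j, p)) ((j, a), (j, p)) := le_add_of_nonneg_right hB1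
        _ ≤ 0 := hsum
    have stepW : ∀ (s : (Fin k × Fin n) × (Fin k × Fin m)) (α), W α s = 0 := by
      rintro ⟨⟨i, a⟩, ⟨x, p⟩⟩ α
      rcases eq_or_ne x i with rfl | hx
      · exact AuxCP.col_zero_of_diag_zero (by rw [← hWB]; exact step3 x a p) α
      · exact stepW1 _ hx α
    have hBall : ∀ s t, B s t = 0 := by
      intro s t
      rw [hWB, Matrix.mul_apply]
      exact Finset.sum_eq_zero fun α _ => by
        rw [conjTranspose_apply, stepW s α, star_zero, zero_mul]
    have i₀ : Fin k := ⟨0, by omega⟩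
    have hC : AuxCP.choi Λ = A.submatrix
        (fun r : Fin n × Fin m => (((i₀, r.1), (i₀, r.2)) : (Fin k × Fin n) × (Fin k × Fin m)))
        (fun r => ((i₀, r.1), (i₀, r.2))) := by
      ext ⟨a, p⟩ ⟨b, q⟩
      have hkey := key i₀ i₀ a b i₀ i₀ p q
      rw [if_pos ⟨rfl, rfl⟩, hBall, add_zero] at hkey
      exact hkey
    exact AuxCP.isCP_of_choi_psd Λ (by rw [hC]; exact hA.submatrix _)
end
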